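/- arXiv:1611.00411 — 3 statements merged into one kernel-verified Lean document; each statement's English description precedes it below -/
import Mathlib

section
/- Any two legal stabilizing sequences for a sandpile s are permutations of each other. Consequently the odometer function u(x) = number of occurrences of x in a legal stabilizing sequence is well defined, independent of the choice of legal stabilizing sequence. -/
/-- Toppling vertex `x`: `x` loses `deg x` particles and each neighbor gains one. -/
def SimpleGraph.topple {V : Type*} [DecidableEq V] (G : SimpleGraph V) [G.LocallyFinite]
    (s : V → ℤ) (x : V) : V → ℤ :=
  fun v => s v + (if v ∈ G.neighborFinset x then 1 else 0) - (if v = x then (G.degree x : ℤ) else 0)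

/-- A sequence of vertices is legal for `s` if each vertex is unstable at the time it is toppled. -/
def SimpleGraph.Legal {V : Type*} [DecidableEq V] (G : SimpleGraph V) [G.LocallyFinite]
    (s : V → ℤ) (l : List V) : Prop :=
  ∀ i : Fin l.length, (G.degree (l.get i) : ℤ) ≤ (l.take i).foldl (G.topple) s (l.get i)

/-- A sequence of vertices is stabilizing for `s` if the resulting configuration is stable. -/
def SimpleGraph.Stabilizing {V : Type*} [DecidableEq V] (G : SimpleGraph V) [G.LocallyFinite]
    (s : V → ℤ) (l : List V) : Prop :=
  ∀ v, l.foldl (G.topple) s v ≤ (G.degree v : ℤ) - 1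

section Aux

variable {V : Type*} [DecidableEq V] (G : SimpleGraph V) [G.LocallyFinite]

/-- The total effect of a toppling sequence is additive. -/
lemma foldl_topple_eq (l : List V) (s : V → ℤ) (v : V) :
    l.foldl (G.topple) s v =
      s v + (l.map (fun x => (if v ∈ G.neighborFinset x then (1:ℤ) else 0)
        - (if v = x then (G.degree x : ℤ) else 0))).sum := by
  induction l generalizing s with
  | nil => simp
  | cons x t ih =>
      simp only [List.foldl_cons, List.map_cons, List.sum_cons, ih]
      simp [SimpleGraph.topple]
      ring

lemma stabilizing_of_perm {l l' : List V} (h : l.Perm l') {s : V → ℤ}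
    (hs : G.Stabilizing s l) : G.Stabilizing s l' := by
  intro v
  rw [foldl_topple_eq, ← (h.map _).sum_eq, ← foldl_topple_eq]
  exact hs v

/-- Key lemma: counts in a legal sequence are bounded by counts in a stabilizing one. -/
lemma count_le_of_legal_stabilizing (σ τ : List V) (s : V → ℤ)
    (hσ : G.Legal s σ) (hτ : G.Stabilizing s τ) :
    ∀ x : V, σ.count x ≤ τ.count x := by
  induction σ generalizing s τ with
  | nil => simp
  | cons x σ' ih =>
      -- x is unstable in s
      have hx0 : (G.degree x : ℤ) ≤ s x := by
        have := hσ ⟨0, by simp⟩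
        exact this
      -- x must occur in τ
      have hxτ : x ∈ τ := by
        by_contra hnot
        have hsum : (0:ℤ) ≤ (τ.map (fun y => (if x ∈ G.neighborFinset y then (1:ℤ) else 0)
            - (if x = y then (G.degree y : ℤ) else 0))).sum := by
          apply List.sum_nonneg
          intro a ha
          obtain ⟨y, hy, rfl⟩ := List.mem_map.mp ha
          have hxy : x ≠ y := fun h => hnot (h ▸ hy)
          simp only [if_neg hxy, sub_zero]
          split <;> norm_num
        have hfin : (G.degree x : ℤ) ≤ τ.foldl (G.topple) s x := by
          rw [foldl_topple_eq]
          linarith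
        have := hτ x
        linarith
      -- σ' is legal for topple s x
      have hσ' : G.Legal (G.topple s x) σ' := by
        intro i
        have := hσ ⟨i + 1, by simpa using Nat.succ_lt_succ i.isLt⟩
        simpa using this
      -- τ.erase x is stabilizing for topple s x
      have hperm : τ.Perm (x :: τ.erase x) := List.perm_cons_erase hxτ
      have hτ' : G.Stabilizing (G.topple s x) (τ.erase x) := by
        have := stabilizing_of_perm G hperm hτ
        intro v
        have h2 := this v
        simpa using h2
      intro y
      have hcount := ih (τ.erase x) (G.topple s x) hσ' hτ' y
      have hτc := List.count_erase (a := y) (b := x) (l := τ)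
      rw [List.count_cons]
      simp only [beq_iff_eq] at hτc ⊢
      by_cases hyx : y = x
      · subst hyx
        have hpos : 1 ≤ τ.count y := List.count_pos_iff.mpr hxτ
        rw [if_pos rfl] at hτc
        rw [if_pos rfl]
        omega
      · rw [if_neg (fun h => hyx h.symm)] at hτc
        rw [if_neg (fun h => hyx h.symm)]
        omega

end Aux

/-- Any two legal stabilizing sequences for a sandpile `s` are permutations of each other;
consequently the odometer `u(x)` = number of occurrences of `x` is well defined. -/
theorem legal_stabilizing_perm {V : Type*} [DecidableEq V] (G : SimpleGraph V)
    [G.LocallyFinite] (hconn : G.Connected) (s : V → ℤ) (l l' : List V)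
    (hl : G.Legal s l) (hl' : G.Legal s l')
    (hsl : G.Stabilizing s l) (hsl' : G.Stabilizing s l') :
    l.Perm l' ∧ ∀ x : V, l.count x = l'.count x := by
  have h1 := count_le_of_legal_stabilizing G l l' s hl hsl'
  have h2 := count_le_of_legal_stabilizing G l' l s hl' hsl
  have hcount : ∀ x : V, l.count x = l'.count x := fun x => le_antisymm (h1 x) (h2 x)
  exact ⟨List.perm_iff_count.mpr hcount, hcount⟩
end

section
/- For any initial divisible-sandpile configuration σ_0 : ℤ^d → ℝ_{≥0} with finite total mass, and any thorough toppling sequence, the odometer functions u_k converge pointwise to a bounded function u_∞ and the mass configurations σ_k converge pointwise to σ_∞ = σ_0 + (1/2d)Δu_∞ satisfying 0 ≤ σ_∞ ≤ 1. -/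
/-- The lattice `ℤᵈ`. -/
abbrev Vd (d : ℕ) := Fin d → ℤ

/-- The neighbor of `x` in direction `j = (i, b)`: `x + eᵢ` if `b`, else `x − eᵢ`. -/
def nbr {d : ℕ} (x : Vd d) (j : Fin d × Bool) : Vd d :=
  if j.2 then x + Pi.single j.1 1 else x - Pi.single j.1 1

/-- The graph Laplacian on `ℤᵈ`: `Δf(x) = Σ_{y ∼ x} (f(y) − f(x))`. -/
def lapd {d : ℕ} (f : Vd d → ℝ) (x : Vd d) : ℝ :=
  ∑ j : Fin d × Bool, (f (nbr x j) - f x)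

/-- Toppling a site of the divisible sandpile: the excess mass above 1 at `x` (if any) is
distributed equally among the `2d` neighbors of `x`. -/
noncomputable def toppleD {d : ℕ} (σ : Vd d → ℝ) (x : Vd d) : Vd d → ℝ := fun v =>
  if v = x then min (σ x) 1
  else if ∃ j : Fin d × Bool, v = nbr x j then σ v + max (σ x - 1) 0 / (2 * d) else σ v

/-- The mass configuration after the first `k` topplings of the sequence `x`. -/
noncomputable def confSeq {d : ℕ} (σ : Vd d → ℝ) (x : ℕ → Vd d) : ℕ → Vd d → ℝ
  | 0 => σ
  | k + 1 => toppleD (confSeq σ x k) (x k)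

/-- The odometer after `k` topplings: total mass emitted from each site so far. -/
noncomputable def odomSeq {d : ℕ} (σ : Vd d → ℝ) (x : ℕ → Vd d) : ℕ → Vd d → ℝ
  | 0 => fun _ => 0
  | k + 1 => fun v =>
      odomSeq σ x k v + if v = x k then max (confSeq σ x k v - 1) 0 else 0

/-- A toppling sequence is thorough if whenever a site attains mass `> 1`, it is chosen
for toppling at some later time. -/
def Thorough {d : ℕ} (σ : Vd d → ℝ) (x : ℕ → Vd d) : Prop :=
  ∀ k v, 1 < confSeq σ x k v → ∃ m, k ≤ m ∧ x m = v

section SandpileAux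

variable {d : ℕ}

lemma nbr_apply (x : Vd d) (j : Fin d × Bool) (k : Fin d) :
    nbr x j k = x k + (if k = j.1 then (if j.2 then 1 else -1) else 0) := by
  rcases j with ⟨i, b⟩
  cases b <;> simp [nbr, Pi.single_apply] <;> split_ifs <;> ring

lemma nbr_ne (x : Vd d) (j : Fin d × Bool) : nbr x j ≠ x := by
  intro h
  have := congrFun h j.1
  rw [nbr_apply] at this
  rcases j with ⟨i, b⟩ <;> cases b <;> simp at this <;> omega

lemma nbr_inj (x : Vd d) {j j' : Fin d × Bool} (h : nbr x j = nbr x j') : j = j' := by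
  rcases j with ⟨i, b⟩; rcases j' with ⟨i', b'⟩
  by_cases hii : i = i'
  · subst hii
    have := congrFun h i
    rw [nbr_apply, nbr_apply] at this
    simp at this
    cases b <;> cases b' <;> simp_all <;> omega
  · exfalso
    have h1 := congrFun h i
    rw [nbr_apply, nbr_apply] at h1
    simp [hii, Ne.symm hii] at h1
    cases b <;> cases b' <;> simp_all <;> omega

lemma nbr_nbr (x : Vd d) (i : Fin d) (b : Bool) : nbr (nbr x (i, b)) (i, !b) = x := by
  funext k
  rw [nbr_apply, nbr_apply]
  cases b <;> simp <;> split_ifs <;> ring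

lemma exists_nbr_comm (v y : Vd d) : (∃ j, y = nbr v j) ↔ (∃ j, v = nbr y j) := by
  constructor <;> rintro ⟨⟨i, b⟩, rfl⟩ <;> exact ⟨(i, !b), (nbr_nbr _ i b).symm⟩

lemma sum_ite_nbr (v y : Vd d) (c : ℝ) :
    (∑ j : Fin d × Bool, if nbr v j = y then c else 0)
      = if ∃ j, y = nbr v j then c else 0 := by
  by_cases h : ∃ j, y = nbr v j
  · obtain ⟨j0, hj0⟩ := h
    rw [if_pos ⟨j0, hj0⟩]
    rw [Finset.sum_eq_single j0]
    · rw [if_pos hj0.symm]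
    · intro j _ hj
      rw [if_neg]
      intro hc
      exact hj (nbr_inj v (hc.trans hj0))
    · simp
  · rw [if_neg h]
    apply Finset.sum_eq_zero
    intro j _
    rw [if_neg]
    intro hc
    exact h ⟨j, hc.symm⟩

/-- Integer triangular-ish function: `V k = k(k+1)` for `k ≥ 0`, `0` otherwise. -/
def Vfun (k : ℤ) : ℤ := max k 0 * (max k 0 + 1)

lemma Vfun_nonneg (k : ℤ) : 0 ≤ Vfun k := by
  unfold Vfun
  have h1 : (0:ℤ) ≤ max k 0 := le_max_right _ _
  nlinarith

lemma Vfun_le {k L : ℤ} (hk : k ≤ L) (hL : 0 ≤ L) : Vfun k ≤ L * (L + 1) := by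
  unfold Vfun
  have h1 : (0:ℤ) ≤ max k 0 := le_max_right _ _
  have h2 : max k 0 ≤ L := max_le hk hL
  nlinarith

lemma Vfun_second_diff (m : ℤ) : Vfun (m - 1) + Vfun (m + 1) - 2 * Vfun m ≤ 2 := by
  rcases le_or_gt 1 m with h | h
  · unfold Vfun
    rw [show max (m-1) 0 = m-1 from by omega, show max (m+1) 0 = m+1 from by omega,
      show max m 0 = m from by omega]
    nlinarith
  · rcases le_or_gt m 0 with h0 | h0
    · have e1 : Vfun (m - 1) = 0 := by unfold Vfun; rw [show max (m-1) 0 = 0 from by omega]; ring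
      have e3 : Vfun m = 0 := by unfold Vfun; rw [show max m 0 = 0 from by omega]; ring
      have e2 : Vfun (m + 1) ≤ 2 := by
        unfold Vfun
        rcases le_or_gt (m+1) 0 with hh | hh
        · rw [show max (m+1) 0 = 0 from by omega]; norm_num
        · rw [show max (m+1) 0 = m+1 from by omega]; nlinarith
      omega
    · omega

/-- `S L j = ((L - |j|)₊)((L-|j|)₊+1)/2` as a real number. -/
noncomputable def Sfun (L : ℕ) (j : ℤ) : ℝ := (Vfun ((L : ℤ) - |j|) : ℝ) / 2

lemma Sfun_nonneg (L : ℕ) (j : ℤ) : 0 ≤ Sfun L j := by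
  unfold Sfun
  have := Vfun_nonneg ((L : ℤ) - |j|)
  positivity

lemma Sfun_le (L : ℕ) (j : ℤ) : Sfun L j ≤ (L * (L + 1) : ℝ) / 2 := by
  unfold Sfun
  have h := Vfun_le (L := (L:ℤ)) (k := (L:ℤ) - |j|) (by have := abs_nonneg j; omega) (by positivity)
  have : (Vfun ((L:ℤ) - |j|) : ℝ) ≤ ((L:ℤ) * ((L:ℤ) + 1) : ℤ) := by exact_mod_cast h
  push_cast at this ⊢
  linarith

lemma Sfun_even (L : ℕ) (j : ℤ) : Sfun L (-j) = Sfun L j := by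
  unfold Sfun; rw [abs_neg]

lemma Sfun_key (L : ℕ) (hL : 1 ≤ L) (j : ℤ) :
    Sfun L (j + 1) + Sfun L (j - 1) - 2 * Sfun L j
      ≤ 1 - (if j = 0 then 2 * (L : ℝ) else 0) := by
  have main : ∀ i : ℤ, 1 ≤ i →
      Sfun L (i + 1) + Sfun L (i - 1) - 2 * Sfun L i ≤ 1 := by
    intro i hi
    unfold Sfun
    rw [abs_of_nonneg (by omega : (0:ℤ) ≤ i + 1), abs_of_nonneg (by omega : (0:ℤ) ≤ i - 1),
      abs_of_nonneg (by omega : (0:ℤ) ≤ i)]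
    have h := Vfun_second_diff ((L:ℤ) - i)
    rw [show (L:ℤ) - (i+1) = ((L:ℤ) - i) - 1 from by ring,
      show (L:ℤ) - (i-1) = ((L:ℤ) - i) + 1 from by ring]
    have : (Vfun (((L:ℤ) - i) - 1) + Vfun (((L:ℤ) - i) + 1) : ℝ) - 2 * Vfun ((L:ℤ)-i) ≤ 2 := by
      exact_mod_cast h
    linarith
  rcases lt_trichotomy j 0 with hj | hj | hj
  · rw [if_neg (by omega)]
    have := main (-j) (by omega)
    rw [show -j + 1 = -(j-1) from by ring, show -j - 1 = -(j+1) from by ring,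
      Sfun_even, Sfun_even, Sfun_even] at this
    linarith
  · subst hj
    rw [if_pos rfl]
    unfold Sfun
    rw [show |(0:ℤ) + 1| = 1 from by decide, show |(0:ℤ) - 1| = 1 from by decide, abs_zero,
      sub_zero]
    have e1 : Vfun ((L:ℤ) - 1) = ((L:ℤ) - 1) * (L:ℤ) := by
      unfold Vfun; rw [show max ((L:ℤ)-1) 0 = (L:ℤ)-1 from by omega]; ring
    have e2 : Vfun (L:ℤ) = (L:ℤ) * ((L:ℤ) + 1) := by
      unfold Vfun; rw [show max (L:ℤ) 0 = (L:ℤ) from by omega]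
    rw [e1, e2]
    push_cast
    ring_nf
    nlinarith [sq_nonneg ((L:ℝ))]
  · rw [if_neg (by omega)]
    linarith [main j (by omega)]

lemma min_eq_sub (a : ℝ) : min a 1 = a - max (a - 1) 0 := by
  rcases le_total a 1 with h | h
  · rw [min_eq_left h, max_eq_right (by linarith)]; ring
  · rw [min_eq_right h, max_eq_left (by linarith)]; ring

lemma lapd_step (σ₀ : Vd d → ℝ) (x : ℕ → Vd d) (k : ℕ) (v : Vd d) :
    lapd (odomSeq σ₀ x (k + 1)) v = lapd (odomSeq σ₀ x k) v
      + (if ∃ j, x k = nbr v j then max (confSeq σ₀ x k (x k) - 1) 0 else 0)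
      - (2 * d) * (if v = x k then max (confSeq σ₀ x k (x k) - 1) 0 else 0) := by
  set e := max (confSeq σ₀ x k (x k) - 1) 0 with he
  have expand : ∀ z : Vd d, odomSeq σ₀ x (k+1) z = odomSeq σ₀ x k z
      + (if z = x k then e else 0) := by
    intro z
    by_cases hz : z = x k
    · subst hz; simp [odomSeq, he]
    · simp [odomSeq, hz]
  unfold lapd
  have : ∀ j : Fin d × Bool,
      odomSeq σ₀ x (k+1) (nbr v j) - odomSeq σ₀ x (k+1) v
        = (odomSeq σ₀ x k (nbr v j) - odomSeq σ₀ x k v)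
          + (if nbr v j = x k then e else 0) - (if v = x k then e else 0) := by
    intro j; rw [expand, expand]; ring
  rw [Finset.sum_congr rfl (fun j _ => this j)]
  rw [Finset.sum_sub_distrib, Finset.sum_add_distrib, sum_ite_nbr]
  rw [Finset.sum_const, Finset.card_univ]
  simp only [Fintype.card_prod, Fintype.card_fin, Fintype.card_bool, nsmul_eq_mul]
  push_cast
  ring

lemma conf_eq (hd : 0 < d) (σ₀ : Vd d → ℝ) (x : ℕ → Vd d) :
    ∀ k v, confSeq σ₀ x k v = σ₀ v + 1 / (2 * d) * lapd (odomSeq σ₀ x k) v := by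
  have h2d : (2 * d : ℝ) ≠ 0 := by positivity
  intro k
  induction k with
  | zero => intro v; simp [confSeq, odomSeq, lapd]
  | succ k ih =>
    intro v
    rw [lapd_step]
    set e := max (confSeq σ₀ x k (x k) - 1) 0 with he
    by_cases hv : v = x k
    · subst hv
      have hnonb : ¬ ∃ j, x k = nbr (x k) j := by
        rintro ⟨j, hj⟩; exact nbr_ne (x k) j hj.symm
      rw [if_neg hnonb, if_pos rfl]
      have hc : confSeq σ₀ x (k + 1) (x k) = min (confSeq σ₀ x k (x k)) 1 := by
        simp [confSeq, toppleD]
      rw [hc, min_eq_sub, ← he, ih (x k)]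
      field_simp
      ring
    · show toppleD (confSeq σ₀ x k) (x k) v = _
      rw [toppleD, if_neg hv, if_neg hv]
      by_cases hnb : ∃ j : Fin d × Bool, v = nbr (x k) j
      · rw [if_pos hnb, if_pos ((exists_nbr_comm v (x k)).mpr hnb), ih v, ← he]
        field_simp
        ring
      · rw [if_neg hnb, if_neg (fun h => hnb ((exists_nbr_comm v (x k)).mp h)), ih v]
        ring

lemma w_main (hd : 0 < d) (σ₀ : Vd d → ℝ) (hpos : ∀ v, 0 ≤ σ₀ v) (hmass : Summable σ₀) :
    ∃ w : Vd d → ℝ, (∀ v, 0 ≤ w v) ∧ (∃ C : ℝ, ∀ v, w v ≤ C) ∧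
      (∀ v, σ₀ v + 1 / (2 * (d : ℝ)) * lapd w v ≤ 1) := by
  classical
  set M : ℝ := ∑' v, σ₀ v with hMdef
  have hM0 : 0 ≤ M := tsum_nonneg hpos
  set L : ℕ := ⌈M⌉₊ + 1 with hLdef
  have hL1 : 1 ≤ L := Nat.le_add_left 1 _
  have hLpos : (0 : ℝ) < L := by
    have : (1 : ℝ) ≤ L := by exact_mod_cast hL1
    linarith
  have hML : M ≤ (L : ℝ) := by
    calc M ≤ (⌈M⌉₊ : ℝ) := Nat.le_ceil M
    _ ≤ (L : ℝ) := by rw [hLdef]; push_cast; linarith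
  have hdpos : (0 : ℝ) < d := by exact_mod_cast hd
  set i0 : Fin d := ⟨0, hd⟩ with hi0
  set SB : ℝ := (L * (L + 1) : ℝ) / 2 with hSB
  have hsumm : ∀ b : ℤ, Summable (fun y : Vd d => σ₀ y * Sfun L (b - y i0)) := by
    intro b
    apply Summable.of_nonneg_of_le
      (fun y => mul_nonneg (hpos y) (Sfun_nonneg _ _))
      (fun y => mul_le_mul_of_nonneg_left (Sfun_le L _) (hpos y))
      (hmass.mul_right SB)
  set W : ℤ → ℝ := fun b => ∑' y, σ₀ y * Sfun L (b - y i0) with hW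
  have hWnonneg : ∀ b, 0 ≤ W b :=
    fun b => tsum_nonneg fun y => mul_nonneg (hpos y) (Sfun_nonneg _ _)
  have hWle : ∀ b, W b ≤ M * SB := by
    intro b
    calc W b ≤ ∑' y, σ₀ y * SB :=
          Summable.tsum_le_tsum (fun y => mul_le_mul_of_nonneg_left (Sfun_le L _) (hpos y))
            (hsumm b) (hmass.mul_right SB)
    _ = M * SB := tsum_mul_right
  refine ⟨fun v => ((d : ℝ) / L) * W (v i0), fun v => mul_nonneg (by positivity) (hWnonneg _),
    ⟨((d : ℝ) / L) * (M * SB), fun v => mul_le_mul_of_nonneg_left (hWle _) (by positivity)⟩, ?_⟩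
  intro v
  set a : ℤ := v i0 with ha
  -- Step A : compute the Laplacian of w
  have hA : lapd (fun v => ((d : ℝ) / L) * W (v i0)) v
      = ((d : ℝ) / L) * ((W (a + 1) - W a) + (W (a - 1) - W a)) := by
    have hterm : ∀ j : Fin d × Bool,
        ((d : ℝ) / L) * W ((nbr v j) i0) - ((d : ℝ) / L) * W (v i0)
          = (if j = (i0, true) then ((d : ℝ) / L) * (W (a + 1) - W a) else 0)
            + (if j = (i0, false) then ((d : ℝ) / L) * (W (a - 1) - W a) else 0) := by
      rintro ⟨i, b⟩
      by_cases hi : i0 = i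
      · subst hi
        have hcoord := nbr_apply v (i0, b) i0
        rw [if_pos rfl] at hcoord
        cases b
        · rw [if_neg (by simp), if_pos rfl]
          simp only [Bool.false_eq_true, if_false] at hcoord
          rw [hcoord, show v i0 + (-1 : ℤ) = a - 1 from by omega]
          ring
        · rw [if_pos rfl, if_neg (by simp)]
          simp only [if_true] at hcoord
          rw [hcoord, show v i0 + (1 : ℤ) = a + 1 from by omega]
          ring
      · have hcoord := nbr_apply v (i, b) i0
        rw [if_neg hi, add_zero] at hcoord
        rw [if_neg (fun h => hi (congrArg Prod.fst h).symm),
          if_neg (fun h => hi (congrArg Prod.fst h).symm), hcoord]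
        ring
    unfold lapd
    rw [Finset.sum_congr rfl (fun j _ => hterm j), Finset.sum_add_distrib,
      Finset.sum_ite_eq' Finset.univ ((i0, true) : Fin d × Bool),
      Finset.sum_ite_eq' Finset.univ ((i0, false) : Fin d × Bool)]
    simp only [Finset.mem_univ, if_pos]
    ring
  -- Step B : the Laplacian as a single tsum
  have hs1 : Summable (fun y : Vd d => σ₀ y * Sfun L ((a - y i0) + 1)) :=
    (hsumm (a + 1)).congr fun y => by rw [show a + 1 - y i0 = (a - y i0) + 1 from by ring]
  have hs2 : Summable (fun y : Vd d => σ₀ y * Sfun L ((a - y i0) - 1)) :=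
    (hsumm (a - 1)).congr fun y => by rw [show a - 1 - y i0 = (a - y i0) - 1 from by ring]
  have hs3 : Summable (fun y : Vd d => σ₀ y * Sfun L (a - y i0)) := hsumm a
  have hsD : Summable (fun y : Vd d => σ₀ y * Sfun L ((a - y i0) + 1)
      + σ₀ y * Sfun L ((a - y i0) - 1) - 2 * (σ₀ y * Sfun L (a - y i0))) :=
    (hs1.add hs2).sub (hs3.mul_left 2)
  have hB : (W (a + 1) - W a) + (W (a - 1) - W a)
      = ∑' y, (σ₀ y * Sfun L ((a - y i0) + 1) + σ₀ y * Sfun L ((a - y i0) - 1)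
          - 2 * (σ₀ y * Sfun L (a - y i0))) := by
    have e1 : W (a + 1) = ∑' y, σ₀ y * Sfun L ((a - y i0) + 1) :=
      tsum_congr fun y => by rw [show a + 1 - y i0 = (a - y i0) + 1 from by ring]
    have e2 : W (a - 1) = ∑' y, σ₀ y * Sfun L ((a - y i0) - 1) :=
      tsum_congr fun y => by rw [show a - 1 - y i0 = (a - y i0) - 1 from by ring]
    have e3 : (2 : ℝ) * W a = ∑' y, 2 * (σ₀ y * Sfun L (a - y i0)) := by
      rw [tsum_mul_left]
    calc (W (a + 1) - W a) + (W (a - 1) - W a)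
        = (∑' y, σ₀ y * Sfun L ((a - y i0) + 1)) + (∑' y, σ₀ y * Sfun L ((a - y i0) - 1))
          - (∑' y, 2 * (σ₀ y * Sfun L (a - y i0))) := by rw [e1, e2, ← e3]; ring
      _ = _ := by rw [← Summable.tsum_add hs1 hs2, ← Summable.tsum_sub (hs1.add hs2) (hs3.mul_left 2)]
  -- Step C : bound the tsum
  have hind : Summable (fun y : Vd d => if y i0 = a then 2 * (L : ℝ) * σ₀ y else 0) := by
    refine Summable.of_nonneg_of_le (fun y => ?_) (fun y => ?_) (hmass.mul_left (2 * (L : ℝ)))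
    · split_ifs with h
      · exact mul_nonneg (mul_nonneg (by norm_num) (le_of_lt hLpos)) (hpos y)
      · exact le_rfl
    · split_ifs with h
      · exact le_rfl
      · exact mul_nonneg (mul_nonneg (by norm_num) (le_of_lt hLpos)) (hpos y)
  have hC : (∑' y, (σ₀ y * Sfun L ((a - y i0) + 1) + σ₀ y * Sfun L ((a - y i0) - 1)
        - 2 * (σ₀ y * Sfun L (a - y i0)))) ≤ M - 2 * (L : ℝ) * σ₀ v := by
    have hptwise : ∀ y : Vd d, σ₀ y * Sfun L ((a - y i0) + 1) + σ₀ y * Sfun L ((a - y i0) - 1)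
        - 2 * (σ₀ y * Sfun L (a - y i0))
          ≤ σ₀ y - (if y i0 = a then 2 * (L : ℝ) * σ₀ y else 0) := by
      intro y
      have hS := Sfun_key L hL1 (a - y i0)
      by_cases hy : y i0 = a
      · rw [if_pos (by omega : a - y i0 = 0)] at hS
        rw [if_pos hy]
        have := mul_le_mul_of_nonneg_left hS (hpos y)
        nlinarith [hpos y]
      · rw [if_neg (by omega : ¬ a - y i0 = 0), sub_zero] at hS
        rw [if_neg hy, sub_zero]
        have := mul_le_mul_of_nonneg_left hS (hpos y)
        nlinarith [hpos y]
    calc _ ≤ ∑' y, (σ₀ y - (if y i0 = a then 2 * (L : ℝ) * σ₀ y else 0)) :=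
          Summable.tsum_le_tsum hptwise hsD (hmass.sub hind)
      _ = M - ∑' y, (if y i0 = a then 2 * (L : ℝ) * σ₀ y else 0) := by
          rw [Summable.tsum_sub hmass hind]
      _ ≤ M - 2 * (L : ℝ) * σ₀ v := by
          have hle : 2 * (L : ℝ) * σ₀ v
              ≤ ∑' y, (if y i0 = a then 2 * (L : ℝ) * σ₀ y else 0) := by
            have := Summable.le_tsum hind v (fun y _ => by
              split_ifs with h
              · exact mul_nonneg (mul_nonneg (by norm_num) (le_of_lt hLpos)) (hpos y)
              · exact le_rfl)
            rwa [if_pos rfl] at this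
          linarith
  -- assemble
  have hlap : lapd (fun v => ((d : ℝ) / L) * W (v i0)) v
      ≤ ((d : ℝ) / L) * (M - 2 * (L : ℝ) * σ₀ v) := by
    rw [hA, hB]
    exact mul_le_mul_of_nonneg_left hC (by positivity)
  have hfinal : σ₀ v + 1 / (2 * (d : ℝ)) * (((d : ℝ) / L) * (M - 2 * (L : ℝ) * σ₀ v))
      = M / (2 * (L : ℝ)) := by
    field_simp
    ring
  have hlast : M / (2 * (L : ℝ)) ≤ 1 := by
    rw [div_le_one (by positivity)]
    linarith
  have hmono := mul_le_mul_of_nonneg_left hlap (by positivity : (0:ℝ) ≤ 1 / (2 * (d : ℝ)))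
  linarith

lemma conf_nonneg (σ₀ : Vd d → ℝ) (hpos : ∀ v, 0 ≤ σ₀ v) (x : ℕ → Vd d) :
    ∀ k v, 0 ≤ confSeq σ₀ x k v := by
  intro k
  induction k with
  | zero => exact hpos
  | succ k ih =>
    intro v
    show 0 ≤ toppleD (confSeq σ₀ x k) (x k) v
    unfold toppleD
    split_ifs with h1 h2
    · exact le_min (ih _) zero_le_one
    · have : (0:ℝ) ≤ max (confSeq σ₀ x k (x k) - 1) 0 / (2 * d) :=
        div_nonneg (le_max_right _ _) (by positivity)
      linarith [ih v]
    · exact ih v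

lemma odom_mono (σ₀ : Vd d → ℝ) (x : ℕ → Vd d) (v : Vd d) :
    Monotone fun k => odomSeq σ₀ x k v := by
  apply monotone_nat_of_le_succ
  intro k
  show odomSeq σ₀ x k v ≤ odomSeq σ₀ x k v + _
  have : (0:ℝ) ≤ if v = x k then max (confSeq σ₀ x k v - 1) 0 else 0 := by
    split_ifs
    · exact le_max_right _ _
    · exact le_rfl
  linarith

lemma odom_le_w (hd : 0 < d) (σ₀ : Vd d → ℝ) (x : ℕ → Vd d) (w : Vd d → ℝ)
    (hw0 : ∀ v, 0 ≤ w v) (hw : ∀ v, σ₀ v + 1 / (2 * (d : ℝ)) * lapd w v ≤ 1) :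
    ∀ k v, odomSeq σ₀ x k v ≤ w v := by
  have hdpos : (0 : ℝ) < d := by exact_mod_cast hd
  intro k
  induction k with
  | zero => intro v; exact hw0 v
  | succ k ih =>
    intro v
    show odomSeq σ₀ x k v + (if v = x k then max (confSeq σ₀ x k v - 1) 0 else 0) ≤ w v
    by_cases hv : v = x k
    swap
    · rw [if_neg hv, add_zero]; exact ih v
    rw [if_pos hv]
    rcases le_or_gt (confSeq σ₀ x k v) 1 with h1 | h1
    · rw [max_eq_right (by linarith), add_zero]; exact ih v
    rw [max_eq_left (by linarith)]
    -- key computation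
    have hstep : lapd (odomSeq σ₀ x k) v ≤ lapd w v + 2 * (d : ℝ) * (w v - odomSeq σ₀ x k v) := by
      have hsum : ∀ j : Fin d × Bool,
          odomSeq σ₀ x k (nbr v j) - odomSeq σ₀ x k v
            ≤ (w (nbr v j) - w v) + (w v - odomSeq σ₀ x k v) := by
        intro j
        have := ih (nbr v j)
        linarith
      calc lapd (odomSeq σ₀ x k) v
          ≤ ∑ j : Fin d × Bool, ((w (nbr v j) - w v) + (w v - odomSeq σ₀ x k v)) :=
            Finset.sum_le_sum (fun j _ => hsum j)
        _ = lapd w v + 2 * (d : ℝ) * (w v - odomSeq σ₀ x k v) := by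
            rw [Finset.sum_add_distrib, Finset.sum_const, Finset.card_univ]
            unfold lapd
            simp only [Fintype.card_prod, Fintype.card_fin, Fintype.card_bool, nsmul_eq_mul]
            push_cast
            ring
    have hconf := conf_eq hd σ₀ x k v
    have hW := hw v
    have hmul := mul_le_mul_of_nonneg_left hstep
      (by positivity : (0:ℝ) ≤ 1 / (2 * (d : ℝ)))
    have hexp : 1 / (2 * (d : ℝ)) * (lapd w v + 2 * (d : ℝ) * (w v - odomSeq σ₀ x k v))
        = 1 / (2 * (d : ℝ)) * lapd w v + (w v - odomSeq σ₀ x k v) := by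
      field_simp
    rw [hexp] at hmul
    rw [hconf] at h1 ⊢
    linarith


end SandpileAux

/-- For any initial configuration `σ₀ ≥ 0` of finite total mass and any thorough toppling
sequence, the odometers converge pointwise to a bounded function `uinf` and the mass
configurations converge pointwise to `σ∞ = σ₀ + (1/2d)Δuinf`, with `0 ≤ σ∞ ≤ 1`. -/
theorem divisible_sandpile_stabilizes {d : ℕ} (hd : 0 < d) (σ₀ : Vd d → ℝ)
    (hpos : ∀ v, 0 ≤ σ₀ v) (hmass : Summable σ₀) (x : ℕ → Vd d) (hth : Thorough σ₀ x) :
    ∃ uinf : Vd d → ℝ, (∃ C : ℝ, ∀ v, uinf v ≤ C) ∧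
      (∀ v, Filter.Tendsto (fun k => odomSeq σ₀ x k v) Filter.atTop (nhds (uinf v))) ∧
      (∀ v, Filter.Tendsto (fun k => confSeq σ₀ x k v) Filter.atTop
        (nhds (σ₀ v + (1 / (2 * d)) * lapd uinf v))) ∧
      (∀ v, 0 ≤ σ₀ v + (1 / (2 * d)) * lapd uinf v ∧
        σ₀ v + (1 / (2 * d)) * lapd uinf v ≤ 1) := by
  obtain ⟨w, hw0, ⟨C, hwC⟩, hw⟩ := w_main hd σ₀ hpos hmass
  have hle := odom_le_w hd σ₀ x w hw0 hw
  set uinf : Vd d → ℝ := fun v => ⨆ k, odomSeq σ₀ x k v with huinf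
  have hbdd : ∀ v, BddAbove (Set.range fun k => odomSeq σ₀ x k v) := by
    intro v
    exact ⟨w v, by rintro _ ⟨k, rfl⟩; exact hle k v⟩
  have htend : ∀ v, Filter.Tendsto (fun k => odomSeq σ₀ x k v) Filter.atTop (nhds (uinf v)) :=
    fun v => tendsto_atTop_ciSup (odom_mono σ₀ x v) (hbdd v)
  have htendconf : ∀ v, Filter.Tendsto (fun k => confSeq σ₀ x k v) Filter.atTop
      (nhds (σ₀ v + (1 / (2 * d)) * lapd uinf v)) := by
    intro v
    have hlap : Filter.Tendsto (fun k => lapd (odomSeq σ₀ x k) v) Filter.atTop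
        (nhds (lapd uinf v)) := by
      unfold lapd
      apply tendsto_finset_sum
      intro j _
      exact (htend (nbr v j)).sub (htend v)
    have := (tendsto_const_nhds.add (hlap.const_mul (1 / (2 * (d:ℝ))))
      : Filter.Tendsto (fun k => σ₀ v + 1 / (2 * (d:ℝ)) * lapd (odomSeq σ₀ x k) v)
        Filter.atTop (nhds (σ₀ v + 1 / (2 * (d:ℝ)) * lapd uinf v)))
    apply this.congr
    intro k
    exact (conf_eq hd σ₀ x k v).symm
  refine ⟨uinf, ⟨C, fun v => le_trans (ciSup_le fun k => hle k v) (hwC v)⟩, htend, htendconf, ?_⟩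
  intro v
  constructor
  · exact ge_of_tendsto (htendconf v) (Filter.Eventually.of_forall
      (fun k => conf_nonneg σ₀ hpos x k v))
  · by_contra hgt
    push_neg at hgt
    set s := σ₀ v + (1 / (2 * (d:ℝ))) * lapd uinf v with hs
    have hev : ∀ᶠ k in Filter.atTop, 1 < confSeq σ₀ x k v :=
      (htendconf v).eventually (eventually_gt_nhds hgt)
    obtain ⟨K, hK⟩ := Filter.eventually_atTop.mp hev
    obtain ⟨m, hKm, hxm⟩ := hth K v (hK K le_rfl)
    have h1 : confSeq σ₀ x (m + 1) v ≤ 1 := by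
      show toppleD (confSeq σ₀ x m) (x m) v ≤ 1
      rw [toppleD, if_pos hxm.symm]
      exact min_le_right _ _
    have h2 : 1 < confSeq σ₀ x (m + 1) v := hK (m + 1) (by omega)
    linarith
end

section
/- Shell growth lemma: In rotor aggregation with cluster R_n and odometer u, fix x ∈ R_n and ρ < |x|, and let m = max of u over the external vertex boundary ∂B°(x,ρ). Then N(x,ρ+1) ≥ (1 + 1/m)·N(x,ρ), where N(x,ρ) = #(B°(x,ρ) ∩ R_n). -/
/-- A configuration during rotor aggregation: the rotor directions (as indices into each
vertex's periodic mechanism), the set of occupied sites, and the current walker (if any). -/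
structure RConf (d : ℕ) where
  rotors : Vd d → ZMod (2 * d)
  occ : Finset (Vd d)
  walker : Option (Vd d)

/-- One step of rotor aggregation with mechanism `mech`: launch a new particle at the
origin, settle the walker at an unoccupied site, or advance the rotor at the walker's
(occupied) site and move the walker to the neighbor it now points to. -/
inductive RStep {d : ℕ} (mech : Vd d → ZMod (2 * d) → Fin d × Bool) :
    RConf d → RConf d → Prop
  | launch (c : RConf d) (h : c.walker = none) :
      RStep mech c ⟨c.rotors, c.occ, some 0⟩
  | settle (c : RConf d) (p : Vd d) (h : c.walker = some p) (hp : p ∉ c.occ) :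
      RStep mech c ⟨c.rotors, insert p c.occ, none⟩
  | move (c : RConf d) (p : Vd d) (h : c.walker = some p) (hp : p ∈ c.occ) :
      RStep mech c ⟨Function.update c.rotors p (c.rotors p + 1), c.occ,
        some (nbr p (mech p (c.rotors p + 1)))⟩

/-- A complete execution of rotor aggregation of `n` particles started at the origin of
`ℤᵈ`, with rotor mechanism `mech` and initial rotor configuration `r₀`. -/
structure RotorExec (d n : ℕ) (mech : Vd d → ZMod (2 * d) → Fin d × Bool)
    (r₀ : Vd d → ZMod (2 * d)) where
  T : ℕ
  conf : ℕ → RConf d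
  init : conf 0 = ⟨r₀, ∅, none⟩
  step : ∀ i < T, RStep mech (conf i) (conf (i + 1))
  walker_final : (conf T).walker = none
  card_final : (conf T).occ.card = n

/-- A rotor mechanism is simple if each of the `2d` neighbors occurs exactly once per
period. -/
def SimpleMech {d : ℕ} (mech : Vd d → ZMod (2 * d) → Fin d × Bool) : Prop :=
  ∀ v, Function.Bijective (mech v)

variable {d n : ℕ} {mech : Vd d → ZMod (2 * d) → Fin d × Bool} {r₀ : Vd d → ZMod (2 * d)}

/-- The final cluster `Rₙ` of occupied sites. -/
def RotorExec.cluster (E : RotorExec d n mech r₀) : Finset (Vd d) := (E.conf E.T).occ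

/-- The odometer: total number of exits from `x` by all particles. -/
def RotorExec.u (E : RotorExec d n mech r₀) (x : Vd d) : ℕ :=
  ((Finset.range E.T).filter
    (fun i => (E.conf i).walker = some x ∧ x ∈ (E.conf i).occ)).card

/-- `N(x,y)`: total number of particle moves from `x` to `y`. -/
def RotorExec.N (E : RotorExec d n mech r₀) (x y : Vd d) : ℕ :=
  ((Finset.range E.T).filter (fun i => (E.conf i).walker = some x ∧
    x ∈ (E.conf i).occ ∧ (E.conf (i + 1)).walker = some y)).card

/-- `θ(x,y) = N(x,y) − N(y,x)`: net number of crossings of the directed edge `(x,y)`. -/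
def RotorExec.theta (E : RotorExec d n mech r₀) (x y : Vd d) : ℤ :=
  (E.N x y : ℤ) - (E.N y x : ℤ)

/-- The squared Euclidean norm of a lattice point (an integer). -/
def inorm2 {d : ℕ} (x : Vd d) : ℤ := ∑ i, (x i) ^ 2

/-- The lattice ball `B(x,k) ∩ ℤᵈ` of Euclidean radius `k` about `x`. -/
noncomputable def dball {d : ℕ} (x : Vd d) (k : ℕ) : Finset (Vd d) :=
  (Finset.Icc (x - fun _ => (k : ℤ)) (x + fun _ => (k : ℤ))).filter
    (fun y => inorm2 (y - x) < (k : ℤ) ^ 2)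

/-- The average of `f` over the lattice ball `B(x,k) ∩ ℤᵈ`. -/
noncomputable def Sk {d : ℕ} (k : ℕ) (f : Vd d → ℝ) (x : Vd d) : ℝ :=
  (∑ y ∈ dball x k, f y) / (dball x k).card

/-- The external vertex boundary of the lattice ball `B(x,ρ) ∩ ℤᵈ`. -/
noncomputable def dbdry {d : ℕ} (x : Vd d) (ρ : ℕ) : Finset (Vd d) :=
  (dball x (ρ + 1)).filter
    (fun y => y ∉ dball x ρ ∧ ∃ j : Fin d × Bool, nbr y j ∈ dball x ρ)

lemma sq_coord_le_inorm2 {d : ℕ} (v : Vd d) (i : Fin d) : (v i)^2 ≤ inorm2 v :=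
  Finset.single_le_sum (fun k _ => sq_nonneg (v k)) (Finset.mem_univ i)

lemma inorm2_add_single {d : ℕ} (v : Vd d) (i : Fin d) (c : ℤ) :
    inorm2 (v + Pi.single i c) = inorm2 v + 2*c*(v i) + c^2 := by
  have h : ∀ k : Fin d, (v k + (if k = i then c else 0))^2
      = (v k)^2 + (if k = i then 2*c*(v i) + c^2 else 0) := by
    intro k
    by_cases hk : k = i
    · subst hk; simp; ring
    · simp [hk]
  simp only [inorm2, Pi.add_apply, Pi.single_apply, h, Finset.sum_add_distrib,
    Finset.sum_ite_eq', Finset.mem_univ, if_true]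
  ring

lemma nbr_sub {d : ℕ} (y x : Vd d) (j : Fin d × Bool) :
    ∃ c : ℤ, (c = 1 ∨ c = -1) ∧ nbr y j - x = (y - x) + Pi.single j.1 c := by
  rcases j with ⟨i, b⟩
  cases b
  · refine ⟨-1, Or.inr rfl, ?_⟩
    funext k
    by_cases hk : k = i <;> simp [nbr, Pi.single_apply, hk] <;> ring
  · refine ⟨1, Or.inl rfl, ?_⟩
    funext k
    by_cases hk : k = i <;> simp [nbr, Pi.single_apply, hk] <;> ring

lemma mem_dball_iff {d : ℕ} {x y : Vd d} {k : ℕ} :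
    y ∈ dball x k ↔ inorm2 (y - x) < (k:ℤ)^2 := by
  constructor
  · exact fun h => (Finset.mem_filter.mp h).2
  · intro h
    refine Finset.mem_filter.mpr ⟨Finset.mem_Icc.mpr ⟨?_, ?_⟩, h⟩ <;>
    · intro i
      have h1 : (y i - x i)^2 < (k:ℤ)^2 :=
        lt_of_le_of_lt (by simpa using sq_coord_le_inorm2 (y - x) i) h
      have h2 := abs_lt.mp (abs_lt_of_sq_lt_sq h1 (by positivity))
      simp only [Pi.sub_apply, Pi.add_apply]
      omega

lemma zero_not_mem_dball {d : ℕ} {x : Vd d} {ρ : ℕ} (hρ : (ρ:ℤ)^2 < inorm2 x) :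
    (0 : Vd d) ∉ dball x ρ := by
  rw [mem_dball_iff]
  have : inorm2 ((0 : Vd d) - x) = inorm2 x := by simp [inorm2]
  omega

lemma dball_mono {d : ℕ} {x : Vd d} {ρ : ℕ} : dball x ρ ⊆ dball x (ρ+1) := by
  intro y hy
  rw [mem_dball_iff] at hy ⊢
  push_cast
  nlinarith [hy, Int.natCast_nonneg ρ]

lemma mem_dbdry_of_nbr {d : ℕ} {x q : Vd d} {ρ : ℕ} (hq : q ∉ dball x ρ) (j : Fin d × Bool)
    (hq' : nbr q j ∈ dball x ρ) : q ∈ dbdry x ρ := by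
  refine Finset.mem_filter.mpr ⟨?_, hq, ⟨j, hq'⟩⟩
  rw [mem_dball_iff] at hq' ⊢
  rw [mem_dball_iff] at hq
  push_neg at hq
  obtain ⟨c, hcc, hsub⟩ := nbr_sub q x j
  rw [hsub, inorm2_add_single] at hq'
  set a := (q - x) j.1 with ha
  have hcoord : (a + c)^2 ≤ inorm2 (q-x) + 2*c*a + c^2 := by
    have h := sq_coord_le_inorm2 ((q-x) + Pi.single j.1 c) j.1
    rw [inorm2_add_single] at h
    simpa [Pi.add_apply, Pi.single_apply, ← ha] using h
  have h1 : (a + c)^2 < (ρ:ℤ)^2 := lt_of_le_of_lt hcoord hq'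
  have h2 := abs_lt.mp (abs_lt_of_sq_lt_sq h1 (by positivity))
  push_cast
  rcases hcc with h | h <;> rw [h] at hq' h2 <;> nlinarith [hq', h2.1, h2.2]
lemma RStep.walker_cases {d : ℕ} {mech : Vd d → ZMod (2 * d) → Fin d × Bool}
    {c c' : RConf d} (h : RStep mech c c') :
    (c.walker = none ∧ c'.occ = c.occ ∧ c'.walker = some 0) ∨
    (∃ p, c.walker = some p ∧ p ∉ c.occ ∧ c'.occ = insert p c.occ ∧ c'.walker = none) ∨
    (∃ p j, c.walker = some p ∧ p ∈ c.occ ∧ c'.occ = c.occ ∧ c'.walker = some (nbr p j)) := by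
  cases h with
  | launch h => exact Or.inl ⟨h, rfl, rfl⟩
  | settle p h hp => exact Or.inr (Or.inl ⟨p, h, hp, rfl, rfl⟩)
  | move p h hp => exact Or.inr (Or.inr ⟨p, _, h, hp, rfl, rfl⟩)

lemma occ_step {d : ℕ} {mech : Vd d → ZMod (2 * d) → Fin d × Bool}
    {c c' : RConf d} (h : RStep mech c c') : c.occ ⊆ c'.occ := by
  rcases h.walker_cases with ⟨_, h, _⟩ | ⟨p, _, _, h, _⟩ | ⟨p, j, _, _, h, _⟩ <;> rw [h] <;>
    first
    | exact Finset.Subset.refl _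
    | exact Finset.subset_insert _ _

lemma occ_mono (E : RotorExec d n mech r₀) :
    ∀ j ≤ E.T, ∀ i ≤ j, (E.conf i).occ ⊆ (E.conf j).occ := by
  intro j
  induction j with
  | zero =>
    intro _ i hi
    rw [Nat.le_zero.mp hi]
  | succ j ih =>
    intro hT i hi
    rcases Nat.eq_or_lt_of_le hi with h | h
    · rw [h]
    · exact (ih (le_trans (Nat.le_succ j) hT) i (Nat.lt_succ_iff.mp h)).trans
        (occ_step (E.step j (Nat.lt_of_succ_le hT)))

lemma exists_settle (E : RotorExec d n mech r₀) :
    ∀ j ≤ E.T, ∀ p ∈ (E.conf j).occ,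
      ∃ t, t < j ∧ (E.conf t).walker = some p ∧ p ∉ (E.conf t).occ := by
  intro j
  induction j with
  | zero =>
    intro _ p hp
    rw [E.init] at hp
    simp at hp
  | succ j ih =>
    intro hT p hp
    by_cases hpj : p ∈ (E.conf j).occ
    · obtain ⟨t, ht, h1, h2⟩ := ih (le_trans (Nat.le_succ j) hT) p hpj
      exact ⟨t, Nat.lt_succ_of_lt ht, h1, h2⟩
    · rcases (E.step j (Nat.lt_of_succ_le hT)).walker_cases with
        ⟨_, hocc, _⟩ | ⟨q, hw, hq, hocc, _⟩ | ⟨q, jj, _, _, hocc, _⟩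
      · rw [hocc] at hp; exact absurd hp hpj
      · rw [hocc] at hp
        rcases Finset.mem_insert.mp hp with h | h
        · exact ⟨j, Nat.lt_succ_self j, h ▸ hw, h ▸ hq⟩
        · exact absurd h hpj
      · rw [hocc] at hp; exact absurd hp hpj

open Finset in
lemma key1 (E : RotorExec d n mech r₀) (x : Vd d) (ρ : ℕ) (hρ : (ρ:ℤ)^2 < inorm2 x) :
    (dball x ρ ∩ E.cluster).card ≤ ∑ y ∈ dbdry x ρ, E.u y := by
  classical
  set P : ℕ → Prop := fun i => ¬ ∃ q, (E.conf i).walker = some q ∧ q ∈ dball x ρ with hP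
  have hsettle : ∀ p ∈ dball x ρ ∩ E.cluster,
      ∃ t, t < E.T ∧ (E.conf t).walker = some p ∧ p ∉ (E.conf t).occ := fun p hp =>
    exists_settle E E.T le_rfl p (Finset.mem_inter.mp hp).2
  choose! st hst1 hst2 hst3 using hsettle
  set f : Vd d → ℕ := fun p => Nat.findGreatest P (st p) with hf
  set CS : Finset ℕ := (Finset.range E.T).filter
    (fun i => P i ∧ ∃ q, (E.conf (i+1)).walker = some q ∧ q ∈ dball x ρ) with hCS
  have h0 : P 0 := by
    rintro ⟨q, hq, _⟩
    rw [E.init] at hq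
    simp at hq
  have hmain : ∀ p ∈ dball x ρ ∩ E.cluster,
      P (f p) ∧ (∃ q, (E.conf (f p + 1)).walker = some q ∧ q ∈ dball x ρ) ∧ f p < st p := by
    intro p hp
    have hpB : p ∈ dball x ρ := (Finset.mem_inter.mp hp).1
    have hPf : P (f p) := Nat.findGreatest_spec (Nat.zero_le _) h0
    have hle : f p ≤ st p := Nat.findGreatest_le _
    have hne : f p ≠ st p := by
      intro h
      rw [h] at hPf
      exact hPf ⟨p, hst2 p hp, hpB⟩
    have hlt : f p < st p := lt_of_le_of_ne hle hne
    refine ⟨hPf, ?_, hlt⟩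
    exact not_not.mp (Nat.findGreatest_is_greatest (Nat.lt_succ_self (f p)) (Nat.succ_le_of_lt hlt))
  have hmaps : ∀ p ∈ dball x ρ ∩ E.cluster, f p ∈ CS := by
    intro p hp
    obtain ⟨h1, h2, h3⟩ := hmain p hp
    exact Finset.mem_filter.mpr ⟨Finset.mem_range.mpr (lt_trans h3 (hst1 p hp)), h1, h2⟩
  have hwnone : ∀ p ∈ dball x ρ ∩ E.cluster, (E.conf (st p + 1)).walker = none := by
    intro p hp
    rcases (E.step (st p) (hst1 p hp)).walker_cases with
      ⟨hw, _, _⟩ | ⟨q, hw, hq, _, hw'⟩ | ⟨q, jj, hw, hq, _, _⟩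
    · rw [hst2 p hp] at hw; simp at hw
    · exact hw'
    · rw [hst2 p hp] at hw
      exact absurd ((Option.some.inj hw) ▸ hq) (hst3 p hp)
  have hbump : ∀ p ∈ dball x ρ ∩ E.cluster, ∀ p' ∈ dball x ρ ∩ E.cluster,
      st p < st p' → f p < f p' := by
    intro p hp p' hp' hlt
    have hP1 : P (st p + 1) := by
      rintro ⟨q, hq, _⟩
      rw [hwnone p hp] at hq
      simp at hq
    have h1 : st p + 1 ≤ f p' := Nat.le_findGreatest (Nat.succ_le_of_lt hlt) hP1
    exact Nat.lt_of_lt_of_le (Nat.lt_succ_of_le (Nat.findGreatest_le _)) h1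
  have hinj : Set.InjOn f ((dball x ρ ∩ E.cluster : Finset (Vd d)) : Set (Vd d)) := by
    intro p hp p' hp' hff
    have hp := Finset.mem_coe.mp hp
    have hp' := Finset.mem_coe.mp hp'
    by_contra hne
    have hstne : st p ≠ st p' := by
      intro h
      exact hne (Option.some.inj ((hst2 p hp).symm.trans (h ▸ hst2 p' hp')))
    rcases lt_or_gt_of_ne hstne with h | h
    · exact absurd hff (Nat.ne_of_lt (hbump p hp p' hp' h))
    · exact absurd hff.symm (Nat.ne_of_lt (hbump p' hp' p hp h))
  have step1 : (dball x ρ ∩ E.cluster).card ≤ CS.card :=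
    Finset.card_le_card_of_injOn f hmaps hinj
  have hsub : CS ⊆ (dbdry x ρ).biUnion (fun y => (Finset.range E.T).filter
      (fun i => (E.conf i).walker = some y ∧ y ∈ (E.conf i).occ)) := by
    intro i hi
    obtain ⟨hiT, hPi, q', hq'w, hq'B⟩ := Finset.mem_filter.mp hi
    have hiT' := Finset.mem_range.mp hiT
    rcases (E.step i hiT').walker_cases with
      ⟨hw, _, hw'⟩ | ⟨p, hw, _, _, hw'⟩ | ⟨p, j, hw, hocc, _, hw'⟩
    · rw [hw'] at hq'w
      rw [← Option.some.inj hq'w] at hq'B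
      exact absurd hq'B (zero_not_mem_dball hρ)
    · rw [hw'] at hq'w; simp at hq'w
    · have hpB : p ∉ dball x ρ := fun hc => hPi ⟨p, hw, hc⟩
      rw [hw'] at hq'w
      have hq'eq : q' = nbr p j := (Option.some.inj hq'w).symm
      have hmem : p ∈ dbdry x ρ := mem_dbdry_of_nbr hpB j (hq'eq ▸ hq'B)
      exact Finset.mem_biUnion.mpr ⟨p, hmem, Finset.mem_filter.mpr ⟨hiT, hw, hocc⟩⟩
  calc (dball x ρ ∩ E.cluster).card ≤ CS.card := step1
    _ ≤ ((dbdry x ρ).biUnion _).card := Finset.card_le_card hsub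
    _ ≤ ∑ y ∈ dbdry x ρ, ((Finset.range E.T).filter
        (fun i => (E.conf i).walker = some y ∧ y ∈ (E.conf i).occ)).card :=
      Finset.card_biUnion_le
    _ = ∑ y ∈ dbdry x ρ, E.u y := by
      refine Finset.sum_congr rfl fun y _ => ?_
      rw [RotorExec.u]

lemma key2 (E : RotorExec d n mech r₀) (x : Vd d) (ρ : ℕ) :
    ∑ y ∈ dbdry x ρ, E.u y ≤ ((dbdry x ρ).sup E.u) * (dbdry x ρ ∩ E.cluster).card := by
  classical
  have h1 : ∑ y ∈ dbdry x ρ, E.u y = ∑ y ∈ (dbdry x ρ).filter (fun y => E.u y ≠ 0), E.u y :=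
    (Finset.sum_filter_ne_zero _).symm
  rw [h1]
  have hsub : (dbdry x ρ).filter (fun y => E.u y ≠ 0) ⊆ dbdry x ρ ∩ E.cluster := by
    intro y hy
    obtain ⟨hyb, hyu⟩ := Finset.mem_filter.mp hy
    refine Finset.mem_inter.mpr ⟨hyb, ?_⟩
    have hne : ((Finset.range E.T).filter
        (fun i => (E.conf i).walker = some y ∧ y ∈ (E.conf i).occ)).Nonempty := by
      rw [← Finset.card_pos]
      exact Nat.pos_of_ne_zero hyu
    obtain ⟨i, hi⟩ := hne
    obtain ⟨hiT, _, hocc⟩ := Finset.mem_filter.mp hi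
    exact occ_mono E E.T le_rfl i (le_of_lt (Finset.mem_range.mp hiT)) hocc
  calc ∑ y ∈ (dbdry x ρ).filter (fun y => E.u y ≠ 0), E.u y
      ≤ ∑ _y ∈ (dbdry x ρ).filter (fun y => E.u y ≠ 0), (dbdry x ρ).sup E.u :=
        Finset.sum_le_sum fun y hy => Finset.le_sup (Finset.mem_of_mem_filter y hy)
    _ = ((dbdry x ρ).filter (fun y => E.u y ≠ 0)).card * (dbdry x ρ).sup E.u := by
        rw [Finset.sum_const, smul_eq_mul]
    _ ≤ (dbdry x ρ ∩ E.cluster).card * (dbdry x ρ).sup E.u :=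
        Nat.mul_le_mul_right _ (Finset.card_le_card hsub)
    _ = ((dbdry x ρ).sup E.u) * (dbdry x ρ ∩ E.cluster).card := Nat.mul_comm _ _

lemma key3 (E : RotorExec d n mech r₀) (x : Vd d) (ρ : ℕ) :
    (dbdry x ρ ∩ E.cluster).card + (dball x ρ ∩ E.cluster).card
      ≤ (dball x (ρ+1) ∩ E.cluster).card := by
  classical
  have hdisj : Disjoint (dbdry x ρ ∩ E.cluster) (dball x ρ ∩ E.cluster) := by
    rw [Finset.disjoint_left]
    intro y hy hy'
    exact ((Finset.mem_filter.mp (Finset.mem_inter.mp hy).1).2).1 (Finset.mem_inter.mp hy').1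
  have hsub : (dbdry x ρ ∩ E.cluster) ∪ (dball x ρ ∩ E.cluster) ⊆ dball x (ρ+1) ∩ E.cluster := by
    intro y hy
    rcases Finset.mem_union.mp hy with h | h
    · obtain ⟨h1, h2⟩ := Finset.mem_inter.mp h
      exact Finset.mem_inter.mpr ⟨Finset.mem_of_mem_filter y h1, h2⟩
    · obtain ⟨h1, h2⟩ := Finset.mem_inter.mp h
      exact Finset.mem_inter.mpr ⟨dball_mono h1, h2⟩
  calc (dbdry x ρ ∩ E.cluster).card + (dball x ρ ∩ E.cluster).card
      = ((dbdry x ρ ∩ E.cluster) ∪ (dball x ρ ∩ E.cluster)).card :=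
        (Finset.card_union_of_disjoint hdisj).symm
    _ ≤ _ := Finset.card_le_card hsub

/-- Shell growth lemma: for `x ∈ Rₙ` and `ρ < |x|`, with `m` the maximum of the odometer
over `∂B°(x,ρ)` and `N(x,ρ) = #(B°(x,ρ) ∩ Rₙ)`, one has
`N(x,ρ+1) ≥ (1 + 1/m)·N(x,ρ)`. -/
theorem shell_growth {d n : ℕ} {mech : Vd d → ZMod (2 * d) → Fin d × Bool}
    {r₀ : Vd d → ZMod (2 * d)} (hd : 0 < d) (hmech : SimpleMech mech)
    (E : RotorExec d n mech r₀) (x : Vd d) (hx : x ∈ E.cluster)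
    (ρ : ℕ) (hρ : (ρ : ℤ) ^ 2 < inorm2 x) :
    (1 + 1 / (((dbdry x ρ).sup E.u : ℕ) : ℝ)) * ((dball x ρ ∩ E.cluster).card : ℝ) ≤
      ((dball x (ρ + 1) ∩ E.cluster).card : ℝ) := by
  classical
  have k1 := key1 E x ρ hρ
  have k2 := key2 E x ρ
  have k3 := key3 E x ρ
  set m : ℕ := (dbdry x ρ).sup E.u with hm
  set a : ℕ := (dball x ρ ∩ E.cluster).card with ha
  set b : ℕ := (dbdry x ρ ∩ E.cluster).card with hb
  set cc : ℕ := (dball x (ρ+1) ∩ E.cluster).card with hcc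
  have hab : a ≤ m * b := le_trans k1 k2
  have habc : b + a ≤ cc := k3
  rcases Nat.eq_zero_or_pos m with hm0 | hmpos
  · rw [hm0, Nat.zero_mul] at hab
    have ha0 : a = 0 := Nat.le_zero.mp hab
    rw [ha0, hm0]
    simp
  · have hm1 : (1:ℝ) ≤ (m:ℝ) := by exact_mod_cast hmpos
    have hab' : (a:ℝ) ≤ (m:ℝ) * (b:ℝ) := by exact_mod_cast hab
    have habc' : (b:ℝ) + (a:ℝ) ≤ (cc:ℝ) := by exact_mod_cast habc
    have hdiv : (a:ℝ)/(m:ℝ) ≤ (b:ℝ) := by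
      rw [div_le_iff₀ (by linarith)]
      linarith
    have heq : (1 + 1/(m:ℝ)) * (a:ℝ) = (a:ℝ) + (a:ℝ)/(m:ℝ) := by ring
    rw [heq]
    linarith
end
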